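/- Let B be a Banach space, let t ↦ φ_t be a family of Schwartz functions on ℝ^d differentiable in the Schwartz topology at t = a, and let t ↦ u_t be a family of B-valued tempered distributions differentiable in the weak (pointwise) sense at t = a. Then the pairing t ↦ ⟨u_t, φ_t⟩ is differentiable at t = a and d/dt ⟨u_t, φ_t⟩ = ⟨du_t/dt, φ_a⟩ + ⟨u_a, dφ_t/dt⟩. -/

import Mathlib

open Filter

open Topology SchwartzMap Uniformity

section Aux

variable {E F : Type*} [NormedAddCommGroup E] [NormedSpace ℝ E]
  [NormedAddCommGroup F] [NormedSpace ℝ F] [CompleteSpace F]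


variable {E F : Type*} [NormedAddCommGroup E] [NormedSpace ℝ E]
  [NormedAddCommGroup F] [NormedSpace ℝ F] [CompleteSpace F]

theorem schwartz_cauchy_seminorm (f : ℕ → 𝓢(E, F)) (hf : CauchySeq f) (k n : ℕ) {ε : ℝ}
    (hε : 0 < ε) :
    ∃ N, ∀ p ≥ N, ∀ q ≥ N, SchwartzMap.seminorm ℝ k n (f p - f q) < ε := by
  have hW : ((schwartzSeminormFamily ℝ E F (k, n)).ball 0 ε) ∈ 𝓝 (0 : 𝓢(E, F)) := by
    have hb := (schwartz_withSeminorms ℝ E F).hasBasis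
    exact hb.mem_of_mem ((schwartzSeminormFamily ℝ E F).basisSets_singleton_mem (k, n) hε)
  have hV : (fun x : 𝓢(E, F) × 𝓢(E, F) => x.2 - x.1) ⁻¹'
      ((schwartzSeminormFamily ℝ E F (k, n)).ball 0 ε) ∈ 𝓤 𝓢(E, F) := by
    rw [uniformity_eq_comap_nhds_zero]
    exact Filter.preimage_mem_comap hW
  obtain ⟨N, hN⟩ := cauchySeq_iff.1 hf _ hV
  refine ⟨N, fun p hp q hq => ?_⟩
  have := hN q hq p hp
  simpa [Seminorm.mem_ball_zero, schwartzSeminormFamily_apply] using this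

theorem schwartz_iteratedFDeriv_sub (u v : 𝓢(E, F)) (n : ℕ) (x : E) :
    iteratedFDeriv ℝ n (⇑(u - v)) x = iteratedFDeriv ℝ n u x - iteratedFDeriv ℝ n v x := by
  have hcoe : ⇑(u - v) = ⇑u - ⇑v := by ext y; simp [SchwartzMap.sub_apply]
  have hadd := iteratedFDeriv_add_apply (𝕜 := ℝ) (f := ⇑u) (g := -⇑v) (x := x)
    (u.smooth n).contDiffAt ((v.smooth n).neg.contDiffAt)
  rw [hcoe, sub_eq_add_neg, hadd, iteratedFDeriv_neg_apply, ← sub_eq_add_neg]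

theorem schwartz_key (f : ℕ → 𝓢(E, F)) (hf : CauchySeq f) (k n : ℕ) {ε : ℝ} (hε : 0 < ε) :
    ∃ N, ∀ p ≥ N, ∀ q ≥ N, ∀ x,
      ‖x‖ ^ k * ‖iteratedFDeriv ℝ n (f p) x - iteratedFDeriv ℝ n (f q) x‖ ≤ ε := by
  obtain ⟨N, hN⟩ := schwartz_cauchy_seminorm f hf k n hε
  refine ⟨N, fun p hp q hq x => ?_⟩
  have h1 := schwartz_iteratedFDeriv_sub (f p) (f q) n x
  calc ‖x‖ ^ k * ‖iteratedFDeriv ℝ n (f p) x - iteratedFDeriv ℝ n (f q) x‖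
      = ‖x‖ ^ k * ‖iteratedFDeriv ℝ n (⇑(f p - f q)) x‖ := by rw [h1]
    _ ≤ SchwartzMap.seminorm ℝ k n (f p - f q) := SchwartzMap.le_seminorm ℝ k n _ x
    _ ≤ ε := (hN p hp q hq).le

theorem schwartz_completeSpace : CompleteSpace 𝓢(E, F) := by
  haveI : (𝓤 𝓢(E, F)).IsCountablyGenerated := IsUniformAddGroup.uniformity_countably_generated
  apply UniformSpace.complete_of_cauchySeq_tendsto
  intro f hf
  -- pointwise limits of all iterated derivatives
  have hptCauchy : ∀ (n : ℕ) (x : E),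
      CauchySeq (fun m => iteratedFDeriv ℝ n (f m) x) := by
    intro n x
    rw [Metric.cauchySeq_iff]
    intro ε hε
    obtain ⟨N, hN⟩ := schwartz_key f hf 0 n (half_pos hε)
    refine ⟨N, fun p hp q hq => ?_⟩
    have := hN p hp q hq x
    rw [pow_zero, one_mul] at this
    rw [dist_eq_norm]
    exact this.trans_lt (half_lt_self hε)
  have hg : ∀ (n : ℕ) (x : E), ∃ y : E[×n]→L[ℝ] F,
      Tendsto (fun m => iteratedFDeriv ℝ n (f m) x) atTop (𝓝 y) :=
    fun n x => cauchySeq_tendsto_of_complete (hptCauchy n x)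
  choose g hgtendsto using hg
  -- uniform weighted estimates against the limit
  have key2 : ∀ k n : ℕ, ∀ ε > (0:ℝ), ∃ N, ∀ p ≥ N, ∀ x,
      ‖x‖ ^ k * ‖iteratedFDeriv ℝ n (f p) x - g n x‖ ≤ ε := by
    intro k n ε hε
    obtain ⟨N, hN⟩ := schwartz_key f hf k n hε
    refine ⟨N, fun p hp x => ?_⟩
    have htend : Tendsto (fun q => ‖x‖ ^ k * ‖iteratedFDeriv ℝ n (f p) x
        - iteratedFDeriv ℝ n (f q) x‖) atTop
        (𝓝 (‖x‖ ^ k * ‖iteratedFDeriv ℝ n (f p) x - g n x‖)) :=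
      (tendsto_const_nhds.sub (hgtendsto n x)).norm.const_mul _
    refine le_of_tendsto htend ?_
    filter_upwards [eventually_ge_atTop N] with q hq
    exact hN p hp q hq x
  -- uniform convergence of the iterated derivatives
  have hunif : ∀ n : ℕ, TendstoUniformly (fun m x => iteratedFDeriv ℝ n (f m) x) (g n) atTop := by
    intro n
    rw [Metric.tendstoUniformly_iff]
    intro ε hε
    obtain ⟨N, hN⟩ := key2 0 n (ε/2) (half_pos hε)
    filter_upwards [eventually_ge_atTop N] with p hp x
    have := hN p hp x
    rw [pow_zero, one_mul] at this
    rw [dist_eq_norm, norm_sub_rev]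
    exact this.trans_lt (half_lt_self hε)
  -- the Taylor series of the limit
  set p : E → FormalMultilinearSeries ℝ E F := fun x n => g n x with hp
  set G : E → F := fun x => (continuousMultilinearCurryFin0 ℝ E F) (g 0 x) with hG
  have hTaylor : HasFTaylorSeriesUpTo ((⊤:ℕ∞) : WithTop ℕ∞) G p := by
    constructor
    · intro x
      rfl
    · intro m _ x
      refine hasFDerivAt_of_tendstoUniformly (l := atTop)
        (f := fun i y => iteratedFDeriv ℝ m (f i) y)
        (f' := fun i y => (iteratedFDeriv ℝ (m+1) (f i) y).curryLeft)
        (g := fun y => p y m)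
        (g' := fun y => (p y m.succ).curryLeft) ?_ ?_ (fun y => hgtendsto m y) x
      · exact ((continuousMultilinearCurryLeftEquiv ℝ (fun _ : Fin (m+1) => E)
          F).isometry.uniformContinuous).comp_tendstoUniformly (hunif (m+1))
      · intro i y
        have hd : Differentiable ℝ (fun z => iteratedFDeriv ℝ m (f i) z) :=
          ((f i).smooth ((m : ℕ∞) + 1)).differentiable_iteratedFDeriv
            (by exact_mod_cast Nat.lt_succ_self m)
        exact (hd y).hasFDerivAt
    · intro m _
      exact (hunif m).continuous (Eventually.of_forall fun i =>
        ((f i).smooth ⊤).continuous_iteratedFDeriv (mod_cast le_top)).frequently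
  have hsmooth : ContDiff ℝ ((⊤:ℕ∞) : WithTop ℕ∞) G := hTaylor.contDiff
  have hiter : ∀ (n : ℕ) (x : E), iteratedFDeriv ℝ n G x = g n x := fun n x =>
    (hTaylor.eq_iteratedFDeriv (mod_cast le_top) x).symm
  have hdecay : ∀ k n : ℕ, ∃ C : ℝ, ∀ x, ‖x‖ ^ k * ‖iteratedFDeriv ℝ n G x‖ ≤ C := by
    intro k n
    obtain ⟨N, hN⟩ := key2 k n 1 one_pos
    refine ⟨SchwartzMap.seminorm ℝ k n (f N) + 1, fun x => ?_⟩
    rw [hiter]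
    have h1 : ‖x‖ ^ k * ‖iteratedFDeriv ℝ n (f N) x‖ ≤ SchwartzMap.seminorm ℝ k n (f N) :=
      SchwartzMap.le_seminorm ℝ k n _ x
    have h2 : ‖x‖ ^ k * ‖iteratedFDeriv ℝ n (f N) x - g n x‖ ≤ 1 := hN N le_rfl x
    have h3 : ‖g n x‖ ≤ ‖iteratedFDeriv ℝ n (f N) x‖ + ‖iteratedFDeriv ℝ n (f N) x - g n x‖ := by
      calc ‖g n x‖ = ‖iteratedFDeriv ℝ n (f N) x - (iteratedFDeriv ℝ n (f N) x - g n x)‖ := by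
            rw [sub_sub_cancel]
        _ ≤ _ := norm_sub_le _ _
    calc ‖x‖ ^ k * ‖g n x‖
        ≤ ‖x‖ ^ k * (‖iteratedFDeriv ℝ n (f N) x‖ + ‖iteratedFDeriv ℝ n (f N) x - g n x‖) :=
          mul_le_mul_of_nonneg_left h3 (pow_nonneg (norm_nonneg x) k)
      _ = ‖x‖ ^ k * ‖iteratedFDeriv ℝ n (f N) x‖
          + ‖x‖ ^ k * ‖iteratedFDeriv ℝ n (f N) x - g n x‖ := mul_add _ _ _
      _ ≤ _ := add_le_add h1 h2
  set Flim : 𝓢(E, F) := ⟨G, hsmooth, hdecay⟩ with hFlim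
  refine ⟨Flim, ?_⟩
  rw [(schwartz_withSeminorms ℝ E F).tendsto_nhds f Flim]
  rintro ⟨k, n⟩ ε hε
  obtain ⟨N, hN⟩ := key2 k n (ε/2) (half_pos hε)
  filter_upwards [eventually_ge_atTop N] with m hm
  have hFcoe : ∀ x, iteratedFDeriv ℝ n (⇑Flim) x = g n x := hiter n
  have hbound : SchwartzMap.seminorm ℝ k n (f m - Flim) ≤ ε/2 := by
    refine SchwartzMap.seminorm_le_bound ℝ k n _ (le_of_lt (half_pos hε)) fun x => ?_
    have heq : iteratedFDeriv ℝ n (⇑(f m - Flim)) x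
        = iteratedFDeriv ℝ n (f m) x - g n x := by
      rw [schwartz_iteratedFDeriv_sub, hFcoe]
    rw [heq]
    exact hN m hm x
  calc schwartzSeminormFamily ℝ E F (k, n) (f m - Flim)
      = SchwartzMap.seminorm ℝ k n (f m - Flim) := by rw [schwartzSeminormFamily_apply]
    _ ≤ ε/2 := hbound
    _ < ε := half_lt_self hε

open Uniformity in
theorem schwartz_barrelled : BarrelledSpace ℝ 𝓢(E, F) := by
  haveI : (𝓤 𝓢(E, F)).IsCountablyGenerated := IsUniformAddGroup.uniformity_countably_generated
  haveI : CompleteSpace 𝓢(E, F) := schwartz_completeSpace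
  haveI : BaireSpace 𝓢(E, F) := by
    letI : PseudoMetricSpace 𝓢(E, F) := UniformSpace.pseudoMetricSpace 𝓢(E, F)
    exact BaireSpace.of_completelyPseudoMetrizable
  infer_instance

theorem schwartz_tendsto_apply {B : Type*} [NormedAddCommGroup B] [NormedSpace ℝ B]
    (T : ℕ → 𝓢(E, F) →L[ℝ] B) (T' : 𝓢(E, F) →L[ℝ] B) (ψ : ℕ → 𝓢(E, F)) (ψ' : 𝓢(E, F))
    (hT : ∀ χ, Tendsto (fun n => T n χ) atTop (𝓝 (T' χ)))
    (hψ : Tendsto ψ atTop (𝓝 ψ')) :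
    Tendsto (fun n => T n (ψ n)) atTop (𝓝 (T' ψ')) := by
  haveI : BarrelledSpace ℝ 𝓢(E, F) := schwartz_barrelled
  have hbdd : ∀ _k : Fin 1, ∀ χ : 𝓢(E, F),
      BddAbove (Set.range fun n => normSeminorm ℝ B (T n χ)) := fun _ χ =>
    ((hT χ).norm).bddAbove_range
  have hequi : UniformEquicontinuous (DFunLike.coe ∘ T) :=
    (norm_withSeminorms ℝ B).banach_steinhaus hbdd
  have h0 : Tendsto (fun n => T n (ψ n - ψ')) atTop (𝓝 0) := by
    rw [NormedAddCommGroup.tendsto_nhds_zero]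
    intro ε hε
    have hU : {q : B × B | dist q.1 q.2 < ε} ∈ 𝓤 B := Metric.dist_mem_uniformity hε
    have hE := hequi.equicontinuous (0 : 𝓢(E, F)) _ hU
    have hE' : ∀ᶠ χ in 𝓝 (0 : 𝓢(E, F)), ∀ i, dist (T i 0) (T i χ) < ε := hE
    have hψ0 : Tendsto (fun n => ψ n - ψ') atTop (𝓝 0) := by
      simpa using hψ.sub (tendsto_const_nhds (x := ψ'))
    filter_upwards [hψ0.eventually hE'] with n hn
    have h2 := hn n
    rw [map_zero, dist_zero_left] at h2
    exact h2
  have h1 := (h0.add (hT ψ'))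
  rw [zero_add] at h1
  refine h1.congr fun n => ?_
  rw [map_sub, sub_add_cancel]

end Aux

/-- Leibniz rule for the pairing of a differentiable family of `B`-valued tempered
distributions with a differentiable family of Schwartz functions. -/
theorem leibniz_pairing {d : ℕ} {B : Type*} [NormedAddCommGroup B] [NormedSpace ℝ B]
    (u : ℝ → SchwartzMap (EuclideanSpace ℝ (Fin d)) ℝ →L[ℝ] B)
    (φ : ℝ → SchwartzMap (EuclideanSpace ℝ (Fin d)) ℝ) (a : ℝ)
    (φ' : SchwartzMap (EuclideanSpace ℝ (Fin d)) ℝ)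
    (u' : SchwartzMap (EuclideanSpace ℝ (Fin d)) ℝ →L[ℝ] B)
    -- `φ` is differentiable at `a` in the Schwartz (Fréchet) topology, with derivative `φ'`:
    (hφ : Tendsto (fun h : ℝ => h⁻¹ • (φ (a + h) - φ a)) (nhdsWithin 0 {0}ᶜ) (nhds φ'))
    -- `u` is differentiable at `a` in the weak (pointwise) sense, with derivative `u'`:
    (hu : ∀ ψ : SchwartzMap (EuclideanSpace ℝ (Fin d)) ℝ,
      Tendsto (fun h : ℝ => h⁻¹ • (u (a + h) ψ - u a ψ)) (nhdsWithin 0 {0}ᶜ) (nhds (u' ψ))) :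
    HasDerivAt (fun t => u t (φ t)) (u' (φ a) + u a φ') a := by
  rw [hasDerivAt_iff_tendsto_slope_zero]
  -- pointwise convergence of `u (a + h)` to `u a`
  have hpt : ∀ χ, Tendsto (fun h : ℝ => u (a + h) χ) (𝓝[≠] 0) (𝓝 (u a χ)) := by
    intro χ
    have h2 : Tendsto (fun h : ℝ => h • (h⁻¹ • (u (a + h) χ - u a χ))) (𝓝[≠] 0)
        (𝓝 ((0 : ℝ) • u' χ)) :=
      ((tendsto_id.mono_left nhdsWithin_le_nhds).smul (hu χ))
    rw [zero_smul] at h2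
    have h3 : ∀ᶠ h in 𝓝[≠] (0 : ℝ),
        h • (h⁻¹ • (u (a + h) χ - u a χ)) = u (a + h) χ - u a χ := by
      filter_upwards [eventually_mem_nhdsWithin] with h hh
      rw [smul_inv_smul₀ hh]
    have h4 := (h2.congr' h3).add (tendsto_const_nhds (x := u a χ))
    rw [zero_add] at h4
    refine h4.congr fun h => ?_
    rw [sub_add_cancel]
  -- first piece: `u (a+h)` applied to the difference quotient of `φ`
  have hA : Tendsto (fun h : ℝ => u (a + h) (h⁻¹ • (φ (a + h) - φ a))) (𝓝[≠] 0)
      (𝓝 (u a φ')) := by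
    rw [tendsto_iff_seq_tendsto]
    intro x hx
    exact schwartz_tendsto_apply (fun n => u (a + x n)) (u a)
      (fun n => (x n)⁻¹ • (φ (a + x n) - φ a)) φ'
      (fun χ => (hpt χ).comp hx) (hφ.comp hx)
  have hsum := hA.add (hu (φ a))
  rw [add_comm] at hsum
  refine Tendsto.congr' ?_ hsum
  filter_upwards [eventually_mem_nhdsWithin] with h hh
  have hh0 : h ≠ 0 := hh
  rw [map_smul, map_sub, ← smul_add, sub_add_sub_cancel]
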